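/- arXiv:1404.1850 — 3 statements merged into one kernel-verified Lean document; each statement's English description precedes it below -/
import Mathlib

section
/- For every integer n ≥ 2, ‖n‖ ≥ (3 / log 3) · log n, where log is the natural logarithm. -/
/-- `IsSumProduct k n` means the positive integer `n` can be written as a
sum-product expression using exactly `k` ones, additions, multiplications
and parentheses. -/
inductive IsSumProduct : ℕ → ℕ → Prop
  | one : IsSumProduct 1 1
  | add {j k a b : ℕ} : IsSumProduct j a → IsSumProduct k b →
      IsSumProduct (j + k) (a + b)
  | mul {j k a b : ℕ} : IsSumProduct j a → IsSumProduct k b →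
      IsSumProduct (j + k) (a * b)

/-- The complexity `‖n‖` of a positive integer `n`: the least number of 1's
needed to express `n` using only 1's, addition, multiplication and
parentheses. -/
noncomputable def complexity (n : ℕ) : ℕ := sInf {k | IsSumProduct k n}

lemma isSumProduct_self : ∀ n : ℕ, 1 ≤ n → IsSumProduct n n := by
  intro n hn
  induction n with
  | zero => omega
  | succ m ih =>
    rcases Nat.eq_or_lt_of_le hn with h | h
    · simpa [← h] using IsSumProduct.one
    · have hm : 1 ≤ m := by omega
      simpa using IsSumProduct.add (ih hm) IsSumProduct.one

lemma isSumProduct_pos {k n : ℕ} (h : IsSumProduct k n) : 1 ≤ k ∧ 1 ≤ n := by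
  induction h with
  | one => exact ⟨le_refl 1, le_refl 1⟩
  | add _ _ ih1 ih2 => omega
  | mul h1 h2 ih1 ih2 => exact ⟨by omega, Nat.one_le_iff_ne_zero.2 (Nat.mul_ne_zero (by omega) (by omega))⟩

lemma one_add_cube (b j k : ℕ) (hb : 1 ≤ b) (hj : 1 ≤ j) (hk : 1 ≤ k)
    (hb3 : b ^ 3 ≤ 3 ^ k) : (1 + b) ^ 3 ≤ 3 ^ (j + k) := by
  rcases Nat.lt_or_ge b 3 with hlt | hge
  · interval_cases b
    · calc (1 + 1) ^ 3 = 8 := by norm_num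
        _ ≤ 3 ^ 2 := by norm_num
        _ ≤ 3 ^ (j + k) := Nat.pow_le_pow_right (by norm_num) (by omega)
    · have hk2 : 2 ≤ k := by
        by_contra h
        have : k = 1 := by omega
        simp [this] at hb3
      calc (1 + 2) ^ 3 = 3 ^ 3 := by norm_num
        _ ≤ 3 ^ (j + k) := Nat.pow_le_pow_right (by norm_num) (by omega)
  · have hbb : 9 ≤ b * b := Nat.mul_le_mul hge hge
    have e1 : 3 * (b * b) ≤ b * b * b := by nlinarith
    have e2 : 9 * b ≤ b * b * b := by nlinarith
    have h1 : (1 + b) ^ 3 ≤ 3 * b ^ 3 := by ring_nf; nlinarith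
    calc (1 + b) ^ 3 ≤ 3 * b ^ 3 := h1
      _ ≤ 3 ^ j * 3 ^ k := by
        have : (3:ℕ) ≤ 3 ^ j := by
          calc (3:ℕ) = 3 ^ 1 := by norm_num
            _ ≤ 3 ^ j := Nat.pow_le_pow_right (by norm_num) hj
        exact Nat.mul_le_mul this hb3
      _ = 3 ^ (j + k) := (pow_add 3 j k).symm

lemma add_cube (a b j k : ℕ) (ha : 1 ≤ a) (hb : 1 ≤ b) (hj : 1 ≤ j) (hk : 1 ≤ k)
    (ha3 : a ^ 3 ≤ 3 ^ j) (hb3 : b ^ 3 ≤ 3 ^ k) : (a + b) ^ 3 ≤ 3 ^ (j + k) := by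
  rcases Nat.lt_or_ge a 2 with ha1 | ha2
  · have : a = 1 := by omega
    subst this
    exact one_add_cube b j k hb hj hk hb3
  rcases Nat.lt_or_ge b 2 with hb1 | hb2
  · have : b = 1 := by omega
    subst this
    rw [add_comm a 1, add_comm j k]
    exact one_add_cube a k j ha hk hj ha3
  · have hab : a + b ≤ a * b := Nat.add_le_mul ha2 hb2
    calc (a + b) ^ 3 ≤ (a * b) ^ 3 := Nat.pow_le_pow_left hab 3
      _ = a ^ 3 * b ^ 3 := mul_pow a b 3
      _ ≤ 3 ^ j * 3 ^ k := Nat.mul_le_mul ha3 hb3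
      _ = 3 ^ (j + k) := (pow_add 3 j k).symm

lemma cube_le {k n : ℕ} (h : IsSumProduct k n) : n ^ 3 ≤ 3 ^ k := by
  induction h with
  | one => norm_num
  | @add j k a b h1 h2 ih1 ih2 =>
    exact add_cube a b j k (isSumProduct_pos h1).2 (isSumProduct_pos h2).2
      (isSumProduct_pos h1).1 (isSumProduct_pos h2).1 ih1 ih2
  | @mul j k a b h1 h2 ih1 ih2 =>
    calc (a * b) ^ 3 = a ^ 3 * b ^ 3 := mul_pow a b 3
      _ ≤ 3 ^ j * 3 ^ k := Nat.mul_le_mul ih1 ih2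
      _ = 3 ^ (j + k) := (pow_add 3 j k).symm

theorem complexity_lower_bound (n : ℕ) (hn : 2 ≤ n) :
    (complexity n : ℝ) ≥ 3 / Real.log 3 * Real.log n := by
  have hne : {k | IsSumProduct k n}.Nonempty :=
    ⟨n, isSumProduct_self n (by omega)⟩
  have hmem : IsSumProduct (complexity n) n := Nat.sInf_mem hne
  have h3 : n ^ 3 ≤ 3 ^ complexity n := cube_le hmem
  have h3R : (n : ℝ) ^ 3 ≤ 3 ^ complexity n := by exact_mod_cast h3
  have hnpos : (0:ℝ) < n := by positivity
  have hlog : Real.log ((n:ℝ) ^ 3) ≤ Real.log (3 ^ complexity n) :=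
    Real.log_le_log (by positivity) h3R
  rw [Real.log_pow, Real.log_pow] at hlog
  have hlog3 : 0 < Real.log 3 := Real.log_pos (by norm_num)
  rw [ge_iff_le, div_mul_eq_mul_div, div_le_iff₀ hlog3]
  push_cast at hlog ⊢
  linarith
end

section
/- For the prime p = 353942783, the representation 353942783 = 2·3 + (1 + 2^2·3^2)·(2 + 3^4·(1 + 2·3^10)) holds, and consequently ‖353942783‖ ≤ 5 + 58 = 63. -/
lemma sp2 : IsSumProduct 2 2 := IsSumProduct.add .one .one
lemma sp3 : IsSumProduct 3 3 := IsSumProduct.add sp2 .one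
lemma sp6 : IsSumProduct 5 6 := IsSumProduct.mul sp2 sp3
lemma sp9 : IsSumProduct 6 9 := IsSumProduct.mul sp3 sp3
lemma sp81 : IsSumProduct 12 81 := IsSumProduct.mul sp9 sp9
lemma sp59049 : IsSumProduct 30 59049 := IsSumProduct.mul sp81 (IsSumProduct.mul sp81 sp9)
lemma sp118098 : IsSumProduct 32 118098 := IsSumProduct.mul sp2 sp59049
lemma sp118099 : IsSumProduct 33 118099 := IsSumProduct.add .one sp118098
lemma sp9566019 : IsSumProduct 45 9566019 := IsSumProduct.mul sp81 sp118099
lemma sp9566021 : IsSumProduct 47 9566021 := IsSumProduct.add sp2 sp9566019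
lemma sp4 : IsSumProduct 4 4 := IsSumProduct.mul sp2 sp2
lemma sp36 : IsSumProduct 10 36 := IsSumProduct.mul sp4 sp9
lemma sp37 : IsSumProduct 11 37 := IsSumProduct.add .one sp36
lemma sp353942777 : IsSumProduct 58 353942777 := IsSumProduct.mul sp37 sp9566021
lemma sp_final : IsSumProduct 63 353942783 := IsSumProduct.add sp6 sp353942777

theorem prime_353942783_representation :
    (353942783 : ℕ) = 2 * 3 + (1 + 2 ^ 2 * 3 ^ 2) * (2 + 3 ^ 4 * (1 + 2 * 3 ^ 10)) ∧
    complexity 353942783 ≤ 63 := by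
  refine ⟨by norm_num, ?_⟩
  exact Nat.sInf_le sp_final
end

section
/- The identity 516743639 = 2·3 + (1 + 2^2·3^6)·(2 + 3^11) holds, and 516743639 = 353 · 1463863 is its factorization into two primes; consequently ‖516743639‖ ≤ 63. -/
lemma sp_pow {k a : ℕ} (h : IsSumProduct k a) :
    ∀ m : ℕ, IsSumProduct (k * (m + 1)) (a ^ (m + 1))
  | 0 => by simpa using h
  | m + 1 => by
    have := IsSumProduct.mul (sp_pow h m) h
    rw [show k * (m + 1) + k = k * (m + 1 + 1) by ring,
        show a ^ (m + 1) * a = a ^ (m + 1 + 1) by ring] at this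
    exact this

theorem n_516743639_representation :
    (516743639 : ℕ) = 2 * 3 + (1 + 2 ^ 2 * 3 ^ 6) * (2 + 3 ^ 11) ∧
    (516743639 : ℕ) = 353 * 1463863 ∧ Nat.Prime 353 ∧ Nat.Prime 1463863 ∧
    complexity 516743639 ≤ 63 := by
  refine ⟨by norm_num, by norm_num, by norm_num, by norm_num, ?_⟩
  have h36 : IsSumProduct 18 (3 ^ 6) := by simpa using sp_pow sp3 5
  have h311 : IsSumProduct 33 (3 ^ 11) := by simpa using sp_pow sp3 10
  have h22 : IsSumProduct 4 (2 ^ 2) := by simpa using sp_pow sp2 1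
  have key : IsSumProduct 63 (2 * 3 + (1 + 2 ^ 2 * 3 ^ 6) * (2 + 3 ^ 11)) := by
    have := IsSumProduct.add (IsSumProduct.mul sp2 sp3)
      (IsSumProduct.mul (IsSumProduct.add .one (IsSumProduct.mul h22 h36))
        (IsSumProduct.add sp2 h311))
    norm_num at this
    convert this using 2
    norm_num
  have : IsSumProduct 63 516743639 := by
    rw [show (516743639 : ℕ) = 2 * 3 + (1 + 2 ^ 2 * 3 ^ 6) * (2 + 3 ^ 11) by norm_num]
    exact key
  exact Nat.sInf_le this
end
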